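/- Let Γ be a connected graph with d+1 distinct eigenvalues and let π(J) = {J_0,...,J_r} be the walk-regular partition of V×V, i.e. the partition by equality of the walk vectors ((A^0)_{uv},...,(A^d)_{uv}). Then r ≥ d, with equality if and only if each class matrix J_i is a polynomial in A. -/

import Mathlib

open scoped Classical

set_option maxRecDepth 8000

/-- Let `Γ` be a connected graph with `d + 1` distinct eigenvalues (the minimal
polynomial of `A` has degree `d + 1`) and let `π(J) = {J_0,…,J_r}` be the walk-regular
partition of `V × V`, i.e. the partition by equality of the walk vectors
`((A^0)_{uv},…,(A^d)_{uv})`. Then `r ≥ d`, with equality iff each class matrix `J_i`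
is a polynomial in `A`. -/
theorem stmt7 {V : Type*} [Fintype V] [DecidableEq V] (G : SimpleGraph V)
    [DecidableRel G.Adj] (hconn : G.Connected) (d r : ℕ)
    (hd : (minpoly ℝ (G.adjMatrix ℝ)).natDegree = d + 1)
    (J : Fin (r + 1) → Set (V × V))
    (hcover : ∀ q : V × V, ∃ i, q ∈ J i)
    (hdisj : ∀ i j, i ≠ j → Disjoint (J i) (J j))
    (hnonempty : ∀ i, (J i).Nonempty)
    (hclass : ∀ i, ∀ q ∈ J i, ∀ q' ∈ J i, ∀ ℓ : ℕ, ℓ ≤ d →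
      ((G.adjMatrix ℝ) ^ ℓ) q.1 q.2 = ((G.adjMatrix ℝ) ^ ℓ) q'.1 q'.2)
    (hsep : ∀ i j, ∀ q ∈ J i, ∀ q' ∈ J j,
      (∀ ℓ : ℕ, ℓ ≤ d →
        ((G.adjMatrix ℝ) ^ ℓ) q.1 q.2 = ((G.adjMatrix ℝ) ^ ℓ) q'.1 q'.2) → i = j) :
    d ≤ r ∧
    (r = d ↔ ∀ i, ∃ p : Polynomial ℝ,
      Polynomial.aeval (G.adjMatrix ℝ) p =
        Matrix.of (fun v w => if (v, w) ∈ J i then (1 : ℝ) else 0)) := by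
  set A := G.adjMatrix ℝ with hA
  -- class matrices
  set E : Fin (r + 1) → Matrix V V ℝ :=
    fun i => Matrix.of (fun v w => if (v, w) ∈ J i then (1 : ℝ) else 0) with hE
  -- choose representatives
  choose rep hrep using hnonempty
  -- every pair lies in a unique class
  have huniq : ∀ q : V × V, ∀ i j, q ∈ J i → q ∈ J j → i = j := by
    intro q i j hi hj
    by_contra h
    exact Set.disjoint_left.mp (hdisj i j h) hi hj
  -- E is linearly independent
  have hEind : LinearIndependent ℝ E := by
    rw [Fintype.linearIndependent_iff]
    intro g hg i
    have := congrFun (congrFun hg (rep i).1) (rep i).2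
    simp only [Matrix.sum_apply, Matrix.smul_apply, Matrix.zero_apply, hE, Matrix.of_apply,
      smul_eq_mul, mul_ite, mul_one, mul_zero] at this
    rw [Finset.sum_eq_single i] at this
    · simpa [hrep i] using this
    · intro j _ hji
      have : ((rep i).1, (rep i).2) ∉ J j := by
        intro hmem
        exact hji (huniq _ _ _ (by simpa using hmem) (hrep i))
      simp [this]
    · intro h; exact absurd (Finset.mem_univ i) h
  -- span of class matrices
  set Q : Submodule ℝ (Matrix V V ℝ) := Submodule.span ℝ (Set.range E) with hQ
  -- span of powers
  set P : Submodule ℝ (Matrix V V ℝ) :=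
    Submodule.span ℝ (Set.range fun i : Fin (d + 1) => A ^ (i : ℕ)) with hP
  have hpowind : LinearIndependent ℝ fun i : Fin (d + 1) => A ^ (i : ℕ) := by
    have := linearIndependent_pow (K := ℝ) A
    rwa [hd] at this
  -- every power A^ℓ, ℓ ≤ d, lies in Q
  have hpow_mem : ∀ ℓ : ℕ, ℓ ≤ d → A ^ ℓ ∈ Q := by
    intro ℓ hℓ
    have : A ^ ℓ = ∑ i, ((A ^ ℓ) (rep i).1 (rep i).2) • E i := by
      ext v w
      obtain ⟨i0, hi0⟩ := hcover (v, w)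
      simp only [Matrix.sum_apply, Matrix.smul_apply, hE, Matrix.of_apply, smul_eq_mul,
        mul_ite, mul_one, mul_zero]
      rw [Finset.sum_eq_single i0]
      · rw [if_pos hi0]
        exact (hclass i0 _ (hrep i0) _ hi0 ℓ hℓ).symm
      · intro j _ hji
        have : (v, w) ∉ J j := fun hmem => hji (huniq _ _ _ hmem hi0)
        simp [this]
      · intro h; exact absurd (Finset.mem_univ i0) h
    rw [this]
    exact Submodule.sum_mem _ fun i _ =>
      Submodule.smul_mem _ _ (Submodule.subset_span (Set.mem_range_self i))
  have hPQ : P ≤ Q := by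
    rw [hP, Submodule.span_le]
    rintro _ ⟨i, rfl⟩
    exact hpow_mem i (Nat.lt_succ_iff.mp i.2)
  have hfinP : Module.finrank ℝ P = d + 1 := by
    rw [hP, finrank_span_eq_card hpowind, Fintype.card_fin]
  have hfinQ : Module.finrank ℝ Q = r + 1 := by
    rw [hQ, finrank_span_eq_card hEind, Fintype.card_fin]
  have hdr : d ≤ r := by
    have := Submodule.finrank_mono hPQ
    omega
  refine ⟨hdr, ?_, ?_⟩
  · -- r = d → each E i is a polynomial in A
    intro hrd i
    have hPeqQ : P = Q := by
      apply Submodule.eq_of_le_of_finrank_eq hPQ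
      rw [hfinP, hfinQ, hrd]
    have hEi : E i ∈ P := by
      rw [hPeqQ]
      exact Submodule.subset_span (Set.mem_range_self i)
    rw [hP, Finsupp.mem_span_range_iff_exists_finsupp] at hEi
    obtain ⟨c, hc⟩ := hEi
    refine ⟨∑ ℓ : Fin (d + 1), Polynomial.C (c ℓ) * Polynomial.X ^ (ℓ : ℕ), ?_⟩
    rw [map_sum]
    refine Eq.trans ?_ hc
    rw [Finsupp.sum_fintype]
    · refine Finset.sum_congr rfl fun ℓ _ => ?_
      rw [map_mul, Polynomial.aeval_C, map_pow, Polynomial.aeval_X, ← Algebra.smul_def]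
    · intro ℓ; simp
  · -- each E i polynomial in A → r = d
    intro hpoly
    have hintA : IsIntegral ℝ A := IsIntegral.of_finite ℝ A
    have hEmem : ∀ i, E i ∈ P := by
      intro i
      obtain ⟨p, hp⟩ := hpoly i
      have := hintA.mem_span_pow (y := E i) ⟨p, hp.symm⟩
      rwa [hd] at this
    -- transfer linear independence into P
    let E' : Fin (r + 1) → P := fun i => ⟨E i, hEmem i⟩
    have hE'ind : LinearIndependent ℝ E' := by
      apply LinearIndependent.of_comp P.subtype
      convert hEind
      rfl
    have := hE'ind.fintype_card_le_finrank
    rw [Fintype.card_fin, hfinP] at this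
    omega
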